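/- In the sandwich semigroup (IS_n, *) with zero element 0 (the empty transformation): (1) x ∈ Ann_L(IS_n, *) (i.e. x * a = 0 for all a ∈ IS_n) if and only if im(x) ⊆ Ā; (2) x ∈ Ann_R(IS_n, *) (i.e. a * x = 0 for all a ∈ IS_n) if and only if dom(x) ⊆ Ā; (3) x ∈ Ann(IS_n, *) = Ann_L ∩ Ann_R if and only if im(x) ⊆ Ā and dom(x) ⊆ Ā. -/

import Mathlib

open Equiv

/-- `IS n` : the symmetric inverse semigroup on `{1,…,n}`, modeled as partial
equivalences of `Fin n`.  Composition is left-to-right: `(x.trans y) t = y (x t)`. -/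
abbrev IS (n : ℕ) := PEquiv (Fin n) (Fin n)

/-- The domain of a partial injective transformation. -/
def sdom {n : ℕ} (x : IS n) : Set (Fin n) := {a | (x a).isSome}

/-- The image of a partial injective transformation. -/
def sim {n : ℕ} (x : IS n) : Set (Fin n) := {b | (x.symm b).isSome}

/-- The rank of a partial injective transformation: the cardinality of its image. -/
noncomputable def srank {n : ℕ} (x : IS n) : ℕ := Nat.card (sim x)

/-- The set `A = {1,…,k}` inside `Fin n`, i.e. the first `k` elements. -/
def SetA (n k : ℕ) : Set (Fin n) := {i | (i : ℕ) < k}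

/-- The idempotent `e` acting identically on `A`, with `dom e = im e = A`. -/
def sandE (n k : ℕ) : IS n where
  toFun i := if (i : ℕ) < k then some i else none
  invFun i := if (i : ℕ) < k then some i else none
  inv a b := by
    split_ifs with h1 h2 <;>
      simp_all [Option.mem_def, eq_comm] <;> rintro rfl <;> omega

/-- The sandwich multiplication `x * y = x e y` (left-to-right composition). -/
def smul (n k : ℕ) (x y : IS n) : IS n := (x.trans (sandE n k)).trans y

lemma sandE_apply {n k : ℕ} (i : Fin n) :
    sandE n k i = if (i : ℕ) < k then some i else none := rfl

lemma left_ann {n k : ℕ} (x : IS n) :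
    (∀ a : IS n, smul n k x a = ⊥) ↔ sim x ⊆ (SetA n k)ᶜ := by
  constructor
  · intro h b hb hbA
    obtain ⟨t, ht⟩ := Option.isSome_iff_exists.mp hb
    have hxt : x t = some b := (x.eq_some_iff).mp ht
    have h2 := h (PEquiv.refl _)
    rw [smul, PEquiv.trans_refl] at h2
    have h3 : (x.trans (sandE n k)) t = none := by rw [h2]; rfl
    rw [PEquiv.trans_eq_none] at h3
    rcases h3 b b with h4 | h4
    · exact h4 hxt
    · exact h4 (by rw [Option.mem_def, sandE_apply, if_pos (show (b:ℕ) < k from hbA)])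
  · intro h a
    refine PEquiv.ext fun t => ?_
    show ((x.trans (sandE n k)).trans a) t = none
    rw [PEquiv.trans_eq_none]
    intro b c
    by_cases hb : (x.trans (sandE n k)) t = some b
    · rw [PEquiv.trans_eq_some] at hb
      obtain ⟨u, hu1, hu2⟩ := hb
      rw [sandE_apply] at hu2
      split_ifs at hu2 with hlt
      · cases hu2
        exact absurd hlt (h (Option.isSome_iff_exists.mpr ⟨t, x.eq_some_iff.mpr hu1⟩))
    · exact Or.inl (by simpa using hb)

lemma right_ann {n k : ℕ} (hk : 1 ≤ k) (hkn : k ≤ n) (x : IS n) :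
    (∀ a : IS n, smul n k a x = ⊥) ↔ sdom x ⊆ (SetA n k)ᶜ := by
  constructor
  · intro h t ht htA
    obtain ⟨u, hu⟩ := Option.isSome_iff_exists.mp ht
    have h2 := h (PEquiv.refl _)
    rw [smul, PEquiv.refl_trans] at h2
    have h3 : ((sandE n k).trans x) t = none := by rw [h2]; rfl
    rw [PEquiv.trans_eq_none] at h3
    rcases h3 t u with h4 | h4
    · exact h4 (by rw [Option.mem_def, sandE_apply, if_pos (show (t:ℕ) < k from htA)])
    · exact h4 hu
  · intro h a
    refine PEquiv.ext fun t => ?_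
    show ((a.trans (sandE n k)).trans x) t = none
    rw [PEquiv.trans_eq_none]
    intro b c
    by_cases hb : (a.trans (sandE n k)) t = some b
    · rw [PEquiv.trans_eq_some] at hb
      obtain ⟨u, hu1, hu2⟩ := hb
      rw [sandE_apply] at hu2
      split_ifs at hu2 with hlt
      · cases hu2
        refine Or.inr fun hc => ?_
        exact h (Option.isSome_iff_exists.mpr ⟨c, hc⟩) hlt
    · exact Or.inl (by simpa using hb)

/-- descriptions of the left, right and two-sided annihilators of
`(IS_n, *)` (with zero element the empty transformation `⊥`). -/
theorem annihilators (n k : ℕ) (hk : 1 ≤ k) (hkn : k ≤ n) (x : IS n) :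
    ((∀ a : IS n, smul n k x a = ⊥) ↔ sim x ⊆ (SetA n k)ᶜ) ∧
    ((∀ a : IS n, smul n k a x = ⊥) ↔ sdom x ⊆ (SetA n k)ᶜ) ∧
    (((∀ a : IS n, smul n k x a = ⊥) ∧ (∀ a : IS n, smul n k a x = ⊥)) ↔
      (sim x ⊆ (SetA n k)ᶜ ∧ sdom x ⊆ (SetA n k)ᶜ)) := by
  exact ⟨left_ann x, right_ann hk hkn x,
    and_congr (left_ann x) (right_ann hk hkn x)⟩
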